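/- Duality identity defining the adjoint two-scale transform: let ε > 0, let u : ℝ → ℝ be continuous with compact support, and let w : ℝ × ℝ → ℝ be continuous, Y-periodic in its second variable, and such that there is R > 0 with w(x, y) = 0 whenever |x| ≥ R. Then ∫_ℝ ∫_{−1/2}^{1/2} (T_ε u)(x, y)·w(x, y) dy dx = ∫_ℝ u(x)·(T_ε* w)(x) dx. -/

import Mathlib

open MeasureTheory intervalIntegral Set

/-- `kEps ε x = ⌊x/ε + 1/2⌋`. -/
noncomputable def kEps (ε x : ℝ) : ℤ := ⌊x / ε + 1 / 2⌋

/-- `cEps ε x = ε · kEps ε x`. -/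
noncomputable def cEps (ε x : ℝ) : ℝ := ε * (kEps ε x : ℝ)

/-- `yEps ε x = x/ε − kEps ε x`. -/
noncomputable def yEps (ε x : ℝ) : ℝ := x / ε - (kEps ε x : ℝ)

/-- The two-scale transform `(T_ε u)(x, y) = u(c_ε(x) + ε·y)`. -/
noncomputable def twoScale (ε : ℝ) (u : ℝ → ℝ) (x y : ℝ) : ℝ := u (cEps ε x + ε * y)

/-- The adjoint two-scale transform `(T_ε* w)(x) = ∫_{−1/2}^{1/2} w(c_ε(x) + ε·z, y_ε(x)) dz`. -/
noncomputable def twoScaleAdj (ε : ℝ) (w : ℝ → ℝ → ℝ) (x : ℝ) : ℝ :=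
  ∫ z in (-(1:ℝ)/2)..(1/2), w (cEps ε x + ε * z) (yEps ε x)

lemma measurable_kEps (ε : ℝ) : Measurable (kEps ε) := by
  unfold kEps
  exact ((measurable_id.div_const ε).add_const _).floor

lemma kEps_eq_iff {ε : ℝ} (hε : 0 < ε) (x : ℝ) (k : ℤ) :
    kEps ε x = k ↔ x ∈ Set.Ico (ε * ((k:ℝ) - 1/2)) (ε * ((k:ℝ) + 1/2)) := by
  have hx : ε * (x / ε) = x := by field_simp
  rw [kEps, Int.floor_eq_iff, Set.mem_Ico]
  constructor
  · rintro ⟨h1, h2⟩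
    constructor <;> nlinarith
  · rintro ⟨h1, h2⟩
    constructor <;> nlinarith

/-- Duality identity defining the adjoint two-scale transform. -/
theorem twoScale_duality (ε : ℝ) (hε : 0 < ε) (u : ℝ → ℝ)
    (hu : Continuous u) (husupp : HasCompactSupport u)
    (w : ℝ → ℝ → ℝ) (hw : Continuous fun p : ℝ × ℝ => w p.1 p.2)
    (hper : ∀ x y : ℝ, w x (y + 1) = w x y)
    (R : ℝ) (hR : 0 < R) (hwsupp : ∀ x y : ℝ, R ≤ |x| → w x y = 0) :
    ∫ x : ℝ, ∫ y in (-(1:ℝ)/2)..(1/2), twoScale ε u x y * w x y =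
      ∫ x : ℝ, u x * twoScaleAdj ε w x := by
  have hε' : ε ≠ 0 := hε.ne'
  have hhalf : (-(1:ℝ)/2) ≤ 1/2 := by norm_num
  -- bounds for u and w
  obtain ⟨Cu, hCu⟩ : ∃ C, ∀ x, |u x| ≤ C := by
    obtain ⟨C, hC⟩ := husupp.exists_bound_of_continuous hu
    exact ⟨C, fun x => by simpa [Real.norm_eq_abs] using hC x⟩
  have hCu0 : 0 ≤ Cu := le_trans (abs_nonneg _) (hCu 0)
  obtain ⟨Cw, hCw0, hCw⟩ : ∃ C, 0 ≤ C ∧ ∀ x y, |w x y| ≤ C := by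
    obtain ⟨C, hC⟩ :=
      (isCompact_Icc.prod isCompact_Icc :
        IsCompact ((Icc (-R) R) ×ˢ (Icc (0:ℝ) 1))).exists_bound_of_continuousOn hw.continuousOn
    refine ⟨max C 0, le_max_right _ _, fun x y => ?_⟩
    rcases le_or_gt R |x| with h | h
    · simp [hwsupp x y h, le_max_right]
    · have hper' : Function.Periodic (w x) 1 := hper x
      have h1 : w x y = w x (Int.fract y) := by
        have h2 := hper'.sub_int_mul_eq (x := y) ⌊y⌋
        rw [← h2]
        congr 1
        rw [Int.fract]; ring
      rw [h1]
      refine le_max_of_le_left ?_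
      have := hC (x, Int.fract y)
        ⟨⟨by linarith [(abs_lt.1 h).1], by linarith [(abs_lt.1 h).2]⟩,
         ⟨Int.fract_nonneg y, (Int.fract_lt_one y).le⟩⟩
      simpa [Real.norm_eq_abs] using this
  -- measurability of the basic maps
  have hkm : Measurable fun x => ((kEps ε x : ℤ) : ℝ) :=
    Measurable.comp measurable_from_top (measurable_kEps ε)
  have hc : Measurable (cEps ε) := measurable_const.mul hkm
  have hy : Measurable (yEps ε) := (measurable_id.div_const ε).sub hkm
  -- the two functions of x
  set F : ℝ → ℝ := fun x => ∫ y in (-(1:ℝ)/2)..(1/2), twoScale ε u x y * w x y with hF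
  set G : ℝ → ℝ := fun x => u x * twoScaleAdj ε w x with hG
  -- F is strongly measurable
  have hFm : StronglyMeasurable F := by
    have hFeq : F = fun x => ∫ y, (fun p : ℝ × ℝ => u (cEps ε p.1 + ε * p.2) * w p.1 p.2) (x, y)
        ∂(volume.restrict (Ioc (-(1:ℝ)/2) (1/2))) := by
      funext x
      rw [hF]
      simp only [twoScale]
      rw [intervalIntegral.integral_of_le hhalf]
    rw [hFeq]
    exact StronglyMeasurable.integral_prod_right'
      (ν := volume.restrict (Ioc (-(1:ℝ)/2) (1/2)))
      (Measurable.stronglyMeasurable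
        ((hu.measurable.comp ((hc.comp measurable_fst).add (measurable_snd.const_mul ε))).mul
          hw.measurable))
  -- the adjoint is strongly measurable
  have hAm : StronglyMeasurable (twoScaleAdj ε w) := by
    have hAeq : twoScaleAdj ε w = fun x => ∫ z,
        (fun p : ℝ × ℝ => w (cEps ε p.1 + ε * p.2) (yEps ε p.1)) (x, z)
        ∂(volume.restrict (Ioc (-(1:ℝ)/2) (1/2))) := by
      funext x
      rw [twoScaleAdj, intervalIntegral.integral_of_le hhalf]
    rw [hAeq]
    exact StronglyMeasurable.integral_prod_right'
      (ν := volume.restrict (Ioc (-(1:ℝ)/2) (1/2)))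
      (Measurable.stronglyMeasurable (hw.measurable.comp
        (((hc.comp measurable_fst).add (measurable_snd.const_mul ε)).prodMk
          (hy.comp measurable_fst))))
  -- bound and support for F
  have hFbound : ∀ x, |F x| ≤ Cu * Cw := by
    intro x
    have h := intervalIntegral.norm_integral_le_of_norm_le_const
      (C := Cu * Cw) (f := fun y => twoScale ε u x y * w x y) (a := -(1:ℝ)/2) (b := 1/2) ?_
    · rw [Real.norm_eq_abs] at h
      calc |F x| ≤ Cu * Cw * |1/2 - (-(1:ℝ)/2)| := h
        _ = Cu * Cw := by norm_num
    · intro y hy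
      rw [Real.norm_eq_abs, abs_mul, twoScale]
      exact mul_le_mul (hCu _) (hCw _ _) (abs_nonneg _) hCu0
  have hFsupp : ∀ x, R ≤ |x| → F x = 0 := by
    intro x hx
    rw [hF]
    simp only
    have h0 : ∀ y, twoScale ε u x y * w x y = 0 := fun y => by rw [hwsupp x y hx, mul_zero]
    simp [h0]
  have hFint : Integrable F := by
    refine Integrable.mono' (g := fun x => (Icc (-R) R).indicator (fun _ => Cu * Cw) x)
      ?_ hFm.aestronglyMeasurable (Filter.Eventually.of_forall fun x => ?_)
    · exact (integrableOn_const measure_Icc_lt_top.ne : IntegrableOn (fun _ : ℝ => Cu * Cw) (Icc (-R) R)).integrable_indicator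
        measurableSet_Icc
    · show ‖F x‖ ≤ (Icc (-R) R).indicator (fun _ => Cu * Cw) x
      rw [Real.norm_eq_abs]
      rcases le_or_gt R |x| with h | h
      · rw [hFsupp x h, abs_zero]
        exact Set.indicator_nonneg (fun _ _ => by positivity) x
      · have hxmem : x ∈ Icc (-R) R :=
          mem_Icc.2 ⟨by linarith [(abs_lt.1 h).1], by linarith [(abs_lt.1 h).2]⟩
        rw [Set.indicator_of_mem hxmem]
        exact hFbound x
  -- bound for the adjoint and integrability of G
  have hAbound : ∀ x, |twoScaleAdj ε w x| ≤ Cw := by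
    intro x
    have h := intervalIntegral.norm_integral_le_of_norm_le_const
      (C := Cw) (f := fun z => w (cEps ε x + ε * z) (yEps ε x)) (a := -(1:ℝ)/2) (b := 1/2) ?_
    · rw [Real.norm_eq_abs] at h
      calc |twoScaleAdj ε w x| ≤ Cw * |1/2 - (-(1:ℝ)/2)| := h
        _ = Cw := by norm_num
    · intro z hz
      rw [Real.norm_eq_abs]
      exact hCw _ _
  have hGint : Integrable G := by
    refine Integrable.mono' (g := fun x => Cw * |u x|)
      (((hu.integrable_of_hasCompactSupport husupp).abs).const_mul Cw)
      ((hu.stronglyMeasurable.mul hAm).aestronglyMeasurable)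
      (Filter.Eventually.of_forall fun x => ?_)
    rw [Real.norm_eq_abs, hG]
    simp only
    rw [abs_mul]
    calc |u x| * |twoScaleAdj ε w x| ≤ |u x| * Cw :=
          mul_le_mul_of_nonneg_left (hAbound x) (abs_nonneg _)
      _ = Cw * |u x| := mul_comm _ _
  -- decomposition of ℝ into the cells of the ε-grid
  have hsm : ∀ k : ℤ, MeasurableSet (kEps ε ⁻¹' {k}) :=
    fun k => measurable_kEps ε (measurableSet_singleton k)
  have hsd : Pairwise (Function.onFun Disjoint fun k : ℤ => kEps ε ⁻¹' {k}) :=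
    fun i j hij => Disjoint.preimage _ (disjoint_singleton.2 hij)
  have hsu : (⋃ k : ℤ, kEps ε ⁻¹' {k}) = univ :=
    eq_univ_of_forall fun x => mem_iUnion.2 ⟨kEps ε x, rfl⟩
  have hdec : ∀ f : ℝ → ℝ, Integrable f →
      ∫ x, f x = ∑' k : ℤ, ∫ x in kEps ε ⁻¹' {k}, f x := by
    intro f hf
    rw [← setIntegral_univ, ← hsu, integral_iUnion hsm hsd (hsu.symm ▸ hf.integrableOn)]
  refine (hdec F hFint).trans ((tsum_congr fun k => ?_).trans (hdec G hGint).symm)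
  -- the per-cell identity
  set a : ℝ := ε * ((k:ℝ) - 1/2) with ha
  set b : ℝ := ε * ((k:ℝ) + 1/2) with hb
  have hab : a ≤ b := by rw [ha, hb]; nlinarith
  have hset : kEps ε ⁻¹' {k} = Ico a b := by
    ext x
    rw [mem_preimage, mem_singleton_iff]
    exact kEps_eq_iff hε x k
  have hcell : ∀ x ∈ Ico a b, kEps ε x = k := fun x hx => (kEps_eq_iff hε x k).2 hx
  have hcc : ∀ x ∈ Ico a b, cEps ε x = ε * (k:ℝ) := fun x hx => by
    rw [cEps, hcell x hx]
  have hyy : ∀ x ∈ Ico a b, yEps ε x = x / ε - (k:ℝ) := fun x hx => by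
    rw [yEps, hcell x hx]
  rw [hset]
  -- normal form for both sides
  have hL : ∫ x in Ico a b, F x =
      ε * ∫ y in Ioc (-(1:ℝ)/2) (1/2),
        u (ε * (k:ℝ) + ε * y) * ∫ z in (-(1:ℝ)/2)..(1/2), w (ε * (k:ℝ) + ε * z) y := by
    have h1 : EqOn F
        (fun x => ∫ y in Ioc (-(1:ℝ)/2) (1/2), u (ε * (k:ℝ) + ε * y) * w x y) (Ico a b) := by
      intro x hx
      rw [hF]
      simp only [twoScale]
      rw [intervalIntegral.integral_of_le hhalf]
      simp only [hcc x hx]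
    rw [setIntegral_congr_fun measurableSet_Ico h1, integral_Ico_eq_integral_Ioo,
      ← integral_Ioc_eq_integral_Ioo]
    -- Fubini on the rectangle
    haveI hfin1 : IsFiniteMeasure (volume.restrict (Ioc a b)) :=
      ⟨by simpa [Measure.restrict_apply_univ] using (measure_Ioc_lt_top : volume (Ioc a b) < ⊤)⟩
    haveI hfin2 : IsFiniteMeasure (volume.restrict (Ioc (-(1:ℝ)/2) (1/2))) :=
      ⟨by simpa [Measure.restrict_apply_univ] using
        (measure_Ioc_lt_top : volume (Ioc (-(1:ℝ)/2) (1/2)) < ⊤)⟩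
    have hint : Integrable (Function.uncurry fun x y => u (ε * (k:ℝ) + ε * y) * w x y)
        ((volume.restrict (Ioc a b)).prod (volume.restrict (Ioc (-(1:ℝ)/2) (1/2)))) := by
      have hcont : Continuous (Function.uncurry fun x y => u (ε * (k:ℝ) + ε * y) * w x y) := by
        apply Continuous.mul
        · exact hu.comp (continuous_const.add (continuous_const.mul continuous_snd))
        · exact hw
      refine Integrable.mono' (integrable_const (Cu * Cw)) hcont.aestronglyMeasurable
        (Filter.Eventually.of_forall fun p => ?_)
      simp only [Function.uncurry, Real.norm_eq_abs, abs_mul]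
      exact mul_le_mul (hCu _) (hCw _ _) (abs_nonneg _) hCu0
    rw [MeasureTheory.integral_integral_swap hint]
    -- evaluate the inner integral by the change of variables x = ε z + ε k
    have hpoint : ∀ y ∈ Ioc (-(1:ℝ)/2) (1/2),
        (fun y => ∫ x in Ioc a b, u (ε * (k:ℝ) + ε * y) * w x y) y =
        (fun y => ε * (u (ε * (k:ℝ) + ε * y) *
          ∫ z in (-(1:ℝ)/2)..(1/2), w (ε * (k:ℝ) + ε * z) y)) y := by
      intro y _
      show (∫ x in Ioc a b, u (ε * (k:ℝ) + ε * y) * w x y) =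
        ε * (u (ε * (k:ℝ) + ε * y) * ∫ z in (-(1:ℝ)/2)..(1/2), w (ε * (k:ℝ) + ε * z) y)
      rw [MeasureTheory.integral_const_mul]
      have hsub : ∫ x in Ioc a b, w x y = ε * ∫ z in (-(1:ℝ)/2)..(1/2), w (ε * (k:ℝ) + ε * z) y := by
        rw [← intervalIntegral.integral_of_le hab]
        have hcv := intervalIntegral.smul_integral_comp_mul_add
          (a := -(1:ℝ)/2) (b := 1/2) (f := fun x => w x y) ε (ε * (k:ℝ))
        rw [show ε * (-(1:ℝ)/2) + ε * (k:ℝ) = a by rw [ha]; ring,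
            show ε * ((1:ℝ)/2) + ε * (k:ℝ) = b by rw [hb]; ring] at hcv
        rw [← hcv, smul_eq_mul]
        congr 1
        exact intervalIntegral.integral_congr fun z _ => add_comm (ε * z) (ε * (k:ℝ)) ▸ rfl
      rw [hsub]
      ring
    rw [setIntegral_congr_fun measurableSet_Ioc hpoint, MeasureTheory.integral_const_mul]
  have hRside : ∫ x in Ico a b, G x =
      ε * ∫ y in Ioc (-(1:ℝ)/2) (1/2),
        u (ε * (k:ℝ) + ε * y) * ∫ z in (-(1:ℝ)/2)..(1/2), w (ε * (k:ℝ) + ε * z) y := by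
    have h1 : EqOn G
        (fun x => u (ε * (k:ℝ) + ε * (x / ε + -(k:ℝ))) *
          ∫ z in (-(1:ℝ)/2)..(1/2), w (ε * (k:ℝ) + ε * z) (x / ε + -(k:ℝ))) (Ico a b) := by
      intro x hx
      show u x * twoScaleAdj ε w x = u (ε * (k:ℝ) + ε * (x / ε + -(k:ℝ))) *
          ∫ z in (-(1:ℝ)/2)..(1/2), w (ε * (k:ℝ) + ε * z) (x / ε + -(k:ℝ))
      have harg : ε * (k:ℝ) + ε * (x / ε + -(k:ℝ)) = x := by
        field_simp
        ring
      rw [harg]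
      congr 1
      rw [twoScaleAdj]
      simp only [hcc x hx, hyy x hx, sub_eq_add_neg]
    rw [setIntegral_congr_fun measurableSet_Ico h1, integral_Ico_eq_integral_Ioo,
      ← integral_Ioc_eq_integral_Ioo, ← intervalIntegral.integral_of_le hab]
    have hcv := intervalIntegral.integral_comp_div_add (a := a) (b := b)
      (f := fun t => u (ε * (k:ℝ) + ε * t) *
        ∫ z in (-(1:ℝ)/2)..(1/2), w (ε * (k:ℝ) + ε * z) t) hε' (-(k:ℝ))
    rw [show a / ε + -(k:ℝ) = -(1:ℝ)/2 by rw [ha]; field_simp; ring,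
        show b / ε + -(k:ℝ) = (1:ℝ)/2 by rw [hb]; field_simp; ring] at hcv
    rw [hcv, intervalIntegral.integral_of_le hhalf, smul_eq_mul]
  rw [hL, hRside]
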